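/- Let Ω ⊂ ℝⁿ be an open set and A ⊂ Ω a non-empty open set. Let f(x) = dist²(x, A^c) and let f⁻_Ω̄ be its extension to closure(Ω) with value inf_Ω f on ∂Ω. Then for every x ∈ closure(Ω): ℳ(λ; A^c)(x) = (1 + λ)·(f⁻_Ω̄(x) − C^l_{λ,Ω}(f⁻_Ω̄)(x)). -/

import Mathlib

noncomputable section
attribute [local instance] Classical.propDecidable

/-- Global lower Moreau envelope `M_λ(g)(x) = inf_{y∈ℝⁿ} {g(y) + λ|y−x|²}`. -/
def moreauLower {n : ℕ} (lam : ℝ) (g : EuclideanSpace ℝ (Fin n) → ℝ)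
    (x : EuclideanSpace ℝ (Fin n)) : ℝ :=
  ⨅ y : EuclideanSpace ℝ (Fin n), (g y + lam * ‖y - x‖ ^ 2)

/-- Global upper Moreau envelope `M^λ(g)(x) = sup_{y∈ℝⁿ} {g(y) − λ|y−x|²}`. -/
def moreauUpper {n : ℕ} (lam : ℝ) (g : EuclideanSpace ℝ (Fin n) → ℝ)
    (x : EuclideanSpace ℝ (Fin n)) : ℝ :=
  ⨆ y : EuclideanSpace ℝ (Fin n), (g y - lam * ‖y - x‖ ^ 2)

/-- Local lower Moreau envelope `M_{λ,Ω}(g)(x) = inf_{y∈closure Ω} {g(y) + λ|y−x|²}`. -/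
def moreauLowerLoc {n : ℕ} (lam : ℝ) (Ω : Set (EuclideanSpace ℝ (Fin n)))
    (g : EuclideanSpace ℝ (Fin n) → ℝ) (x : EuclideanSpace ℝ (Fin n)) : ℝ :=
  sInf ((fun y => g y + lam * ‖y - x‖ ^ 2) '' closure Ω)

/-- Local upper Moreau envelope `M^λ_Ω(g)(x) = sup_{y∈closure Ω} {g(y) − λ|y−x|²}`. -/
def moreauUpperLoc {n : ℕ} (lam : ℝ) (Ω : Set (EuclideanSpace ℝ (Fin n)))
    (g : EuclideanSpace ℝ (Fin n) → ℝ) (x : EuclideanSpace ℝ (Fin n)) : ℝ :=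
  sSup ((fun y => g y - lam * ‖y - x‖ ^ 2) '' closure Ω)

/-- The extension of `f` equal to `f` on `Ω` and to `inf_Ω f` off `Ω`
(this realizes both `f⁻_Ω̄` on `closure Ω` and `f⁻_ℝⁿ` on `ℝⁿ`). -/
def extMinus {n : ℕ} (Ω : Set (EuclideanSpace ℝ (Fin n)))
    (f : EuclideanSpace ℝ (Fin n) → ℝ) (x : EuclideanSpace ℝ (Fin n)) : ℝ :=
  if x ∈ Ω then f x else sInf (f '' Ω)

/-- The extension of `f` equal to `f` on `Ω` and to `sup_Ω f` off `Ω`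
(this realizes both `f⁺_Ω̄` on `closure Ω` and `f⁺_ℝⁿ` on `ℝⁿ`). -/
def extPlus {n : ℕ} (Ω : Set (EuclideanSpace ℝ (Fin n)))
    (f : EuclideanSpace ℝ (Fin n) → ℝ) (x : EuclideanSpace ℝ (Fin n)) : ℝ :=
  if x ∈ Ω then f x else sSup (f '' Ω)

/-- The quadratic multiscale medial axis map
`ℳ(λ; S)(x) = (1+λ)(dist²(x,S) − C^l_λ(dist²(·,S))(x))`, with
`C^l_λ(g) = M^λ(M_λ(g))`. -/
def medialAxisMap {n : ℕ} (lam : ℝ) (S : Set (EuclideanSpace ℝ (Fin n)))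
    (x : EuclideanSpace ℝ (Fin n)) : ℝ :=
  (1 + lam) * ((Metric.infDist x S) ^ 2
    - moreauUpper lam (moreauLower lam (fun y => (Metric.infDist y S) ^ 2)) x)

namespace MedAux

open Metric Set

variable {n : ℕ}


variable {n : ℕ}

lemma algA {lam a b t : ℝ} (hlam : 0 < lam) (ha : 0 ≤ a) (hbt : a ≤ b + t) :
    lam / (1 + lam) * a ^ 2 ≤ b ^ 2 + lam * t ^ 2 := by
  have h1 : (0:ℝ) < 1 + lam := by linarith
  rw [div_mul_eq_mul_div, div_le_iff₀ h1]
  nlinarith [sq_nonneg (b - lam * t), pow_le_pow_left₀ ha hbt 2]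

lemma algB {lam a b t : ℝ} (hlam : 0 < lam) (hb : 0 ≤ b) (hbt : b ≤ a + t) :
    lam / (1 + lam) * b ^ 2 - lam * t ^ 2 ≤ a ^ 2 := by
  have h1 : (0:ℝ) < 1 + lam := by linarith
  rw [sub_le_iff_le_add, div_mul_eq_mul_div, div_le_iff₀ h1]
  nlinarith [sq_nonneg (a - lam * t), pow_le_pow_left₀ hb hbt 2]

lemma lower_bound_pt {lam : ℝ} (hlam : 0 < lam) (S : Set (EuclideanSpace ℝ (Fin n)))
    (x y : EuclideanSpace ℝ (Fin n)) :
    lam / (1 + lam) * infDist x S ^ 2 ≤ infDist y S ^ 2 + lam * ‖y - x‖ ^ 2 := by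
  have h := infDist_le_infDist_add_dist (x := x) (y := y) (s := S)
  have hd : dist x y = ‖y - x‖ := by rw [dist_eq_norm, norm_sub_rev]
  exact algA hlam infDist_nonneg (by rw [← hd]; linarith)

lemma exists_pt {lam : ℝ} (hlam : 0 < lam) (S : Set (EuclideanSpace ℝ (Fin n)))
    (hS : IsClosed S) (x : EuclideanSpace ℝ (Fin n)) (hx : 0 < infDist x S) :
    ∃ y : EuclideanSpace ℝ (Fin n),
      ‖y - x‖ = infDist x S / (1 + lam) ∧
      infDist y S = lam / (1 + lam) * infDist x S := by
  have h1 : (0:ℝ) < 1 + lam := by linarith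
  have hSne : S.Nonempty := by
    rcases S.eq_empty_or_nonempty with h | h
    · rw [h, infDist_empty] at hx; exact absurd hx (lt_irrefl 0)
    · exact h
  obtain ⟨s, hsS, hds⟩ := hS.exists_infDist_eq_dist hSne x
  refine ⟨(lam / (1 + lam)) • x + (1 / (1 + lam)) • s, ?_, ?_⟩
  all_goals
    have hyx : (lam / (1 + lam)) • x + (1 / (1 + lam)) • s - x
        = (1 / (1 + lam)) • (s - x) := by
      match_scalars <;> field_simp <;> ring
    have hsx : ‖s - x‖ = infDist x S := by rw [hds, dist_eq_norm, norm_sub_rev]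
    have hnyx : ‖(lam / (1 + lam)) • x + (1 / (1 + lam)) • s - x‖
        = infDist x S / (1 + lam) := by
      rw [hyx, norm_smul, Real.norm_eq_abs,
        abs_of_pos (by positivity : (0:ℝ) < 1 / (1 + lam)), hsx]
      ring
  · exact hnyx
  · have hys : (lam / (1 + lam)) • x + (1 / (1 + lam)) • s - s
        = (lam / (1 + lam)) • (x - s) := by
      match_scalars <;> field_simp <;> ring
    have hnys : ‖(lam / (1 + lam)) • x + (1 / (1 + lam)) • s - s‖
        = lam / (1 + lam) * infDist x S := by
      rw [hys, norm_smul, Real.norm_eq_abs,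
        abs_of_pos (by positivity : (0:ℝ) < lam / (1 + lam)), hds, dist_eq_norm]
    have hub : infDist ((lam / (1 + lam)) • x + (1 / (1 + lam)) • s) S
        ≤ lam / (1 + lam) * infDist x S := by
      calc infDist _ S ≤ dist ((lam / (1 + lam)) • x + (1 / (1 + lam)) • s) s :=
            infDist_le_dist_of_mem hsS
        _ = lam / (1 + lam) * infDist x S := by rw [dist_eq_norm]; exact hnys
    have h2 := infDist_le_infDist_add_dist (x := x)
      (y := (lam / (1 + lam)) • x + (1 / (1 + lam)) • s) (s := S)
    have hdyx : dist x ((lam / (1 + lam)) • x + (1 / (1 + lam)) • s)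
        = infDist x S / (1 + lam) := by
      rw [dist_comm, dist_eq_norm]; exact hnyx
    rw [hdyx] at h2
    have heq : infDist x S - infDist x S / (1 + lam)
        = lam / (1 + lam) * infDist x S := by field_simp; ring
    exact le_antisymm hub (by linarith)

lemma moreauLower_eq {lam : ℝ} (hlam : 0 < lam) (S : Set (EuclideanSpace ℝ (Fin n)))
    (hS : IsClosed S) (x : EuclideanSpace ℝ (Fin n)) :
    (⨅ y : EuclideanSpace ℝ (Fin n), (infDist y S ^ 2 + lam * ‖y - x‖ ^ 2))
      = lam / (1 + lam) * infDist x S ^ 2 := by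
  have h1 : (0:ℝ) < 1 + lam := by linarith
  have hbdd : BddBelow (Set.range fun y : EuclideanSpace ℝ (Fin n) =>
      infDist y S ^ 2 + lam * ‖y - x‖ ^ 2) := by
    refine ⟨lam / (1 + lam) * infDist x S ^ 2, ?_⟩
    rintro v ⟨y, rfl⟩
    exact lower_bound_pt hlam S x y
  apply le_antisymm
  · rcases eq_or_lt_of_le (infDist_nonneg (x := x) (s := S)) with h0 | hpos
    · refine ciInf_le_of_le hbdd x ?_
      simp [← h0]
    · obtain ⟨y, hyx, hyS⟩ := exists_pt hlam S hS x hpos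
      refine ciInf_le_of_le hbdd y (le_of_eq ?_)
      rw [hyx, hyS]
      field_simp
      ring
  · exact le_ciInf fun y => lower_bound_pt hlam S x y



lemma moreauLowerLoc_eq {lam : ℝ} (hlam : 0 < lam)
    (A Ω : Set (EuclideanSpace ℝ (Fin n))) (hA : IsOpen A) (hAΩ : A ⊆ Ω)
    (x : EuclideanSpace ℝ (Fin n)) (hx : x ∈ closure Ω) :
    sInf ((fun y => infDist y Aᶜ ^ 2 + lam * ‖y - x‖ ^ 2) '' closure Ω)
      = lam / (1 + lam) * infDist x Aᶜ ^ 2 := by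
  have h1 : (0:ℝ) < 1 + lam := by linarith
  have hbdd : BddBelow ((fun y => infDist y Aᶜ ^ 2 + lam * ‖y - x‖ ^ 2) '' closure Ω) := by
    refine ⟨lam / (1 + lam) * infDist x Aᶜ ^ 2, ?_⟩
    rintro v ⟨y, -, rfl⟩
    exact lower_bound_pt hlam Aᶜ x y
  apply le_antisymm
  · rcases eq_or_lt_of_le (infDist_nonneg (x := x) (s := Aᶜ)) with h0 | hpos
    · refine le_trans (csInf_le hbdd ⟨x, hx, rfl⟩) ?_
      simp [← h0]
    · obtain ⟨y, hyx, hyS⟩ := exists_pt hlam Aᶜ hA.isClosed_compl x hpos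
      have hyA : y ∈ A := by
        by_contra hyA
        have : infDist y Aᶜ = 0 := infDist_zero_of_mem hyA
        rw [this] at hyS
        have : 0 < lam / (1 + lam) * infDist x Aᶜ := by positivity
        linarith
      refine le_trans (csInf_le hbdd ⟨y, subset_closure (hAΩ hyA), rfl⟩) (le_of_eq ?_)
      simp only
      rw [hyx, hyS]
      field_simp
      ring
  · refine le_csInf ⟨_, ⟨x, hx, rfl⟩⟩ ?_
    rintro v ⟨y, -, rfl⟩
    exact lower_bound_pt hlam Aᶜ x y

lemma moreauUpper_loc_eq {lam : ℝ} (hlam : 0 < lam)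
    (A Ω : Set (EuclideanSpace ℝ (Fin n))) (hAΩ : A ⊆ Ω)
    (x : EuclideanSpace ℝ (Fin n)) (hx : x ∈ closure Ω) :
    (⨆ y : EuclideanSpace ℝ (Fin n),
        (lam / (1 + lam) * infDist y Aᶜ ^ 2 - lam * ‖y - x‖ ^ 2))
      = sSup ((fun y => lam / (1 + lam) * infDist y Aᶜ ^ 2 - lam * ‖y - x‖ ^ 2)
          '' closure Ω) := by
  have h1 : (0:ℝ) < 1 + lam := by linarith
  have hub : ∀ y : EuclideanSpace ℝ (Fin n),
      lam / (1 + lam) * infDist y Aᶜ ^ 2 - lam * ‖y - x‖ ^ 2 ≤ infDist x Aᶜ ^ 2 := by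
    intro y
    have h := infDist_le_infDist_add_dist (x := y) (y := x) (s := Aᶜ)
    have hd : dist y x = ‖y - x‖ := dist_eq_norm y x
    exact algB hlam infDist_nonneg (by rw [← hd]; linarith)
  have hbddR : BddAbove (Set.range fun y : EuclideanSpace ℝ (Fin n) =>
      lam / (1 + lam) * infDist y Aᶜ ^ 2 - lam * ‖y - x‖ ^ 2) := by
    refine ⟨infDist x Aᶜ ^ 2, ?_⟩
    rintro v ⟨y, rfl⟩
    exact hub y
  have hbddI : BddAbove ((fun y => lam / (1 + lam) * infDist y Aᶜ ^ 2
      - lam * ‖y - x‖ ^ 2) '' closure Ω) :=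
    hbddR.mono (image_subset_range _ _)
  apply le_antisymm
  · refine ciSup_le fun y => ?_
    by_cases hy : y ∈ closure Ω
    · exact le_csSup hbddI ⟨y, hy, rfl⟩
    · have hyc : y ∈ Aᶜ := fun hyA => hy (subset_closure (hAΩ hyA))
      have h0 : infDist y Aᶜ = 0 := infDist_zero_of_mem hyc
      have hle : lam / (1 + lam) * infDist y Aᶜ ^ 2 - lam * ‖y - x‖ ^ 2
          ≤ lam / (1 + lam) * infDist x Aᶜ ^ 2 - lam * ‖x - x‖ ^ 2 := by
        rw [h0]
        simp only [sub_self, norm_zero]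
        have : (0:ℝ) ≤ lam / (1 + lam) * infDist x Aᶜ ^ 2 := by positivity
        have : (0:ℝ) ≤ lam * ‖y - x‖ ^ 2 := by positivity
        nlinarith [Metric.infDist_nonneg (x := x) (s := Aᶜ)]
      exact le_trans hle (le_csSup hbddI ⟨x, hx, rfl⟩)
  · refine csSup_le ⟨_, ⟨x, hx, rfl⟩⟩ ?_
    rintro v ⟨y, -, rfl⟩
    exact le_ciSup hbddR y

lemma inf_zero (A Ω : Set (EuclideanSpace ℝ (Fin n))) (hA : IsOpen A)
    (hAne : A.Nonempty) (hAΩ : A ⊆ Ω) :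
    sInf ((fun y => infDist y Aᶜ ^ 2) '' Ω) = 0 := by
  have hΩne : Ω.Nonempty := hAne.mono hAΩ
  have hbdd : BddBelow ((fun y => infDist y Aᶜ ^ 2) '' Ω) := by
    refine ⟨0, ?_⟩; rintro v ⟨y, -, rfl⟩; positivity
  have key : ∀ ε : ℝ, 0 < ε → ∃ y ∈ Ω, infDist y Aᶜ ^ 2 < ε := by
    intro ε hε
    by_cases hc : ∃ y ∈ Ω, y ∈ Aᶜ
    · obtain ⟨y, hyΩ, hyc⟩ := hc
      exact ⟨y, hyΩ, by rw [infDist_zero_of_mem hyc]; simpa using hε⟩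
    · push_neg at hc
      have hΩA : Ω ⊆ A := fun y hy => not_not.mp (hc y hy)
      by_cases hU : Aᶜ = ∅
      · obtain ⟨a, ha⟩ := hAne
        exact ⟨a, hAΩ ha, by rw [hU, infDist_empty]; simpa using hε⟩
      · have hfr : (frontier A).Nonempty := by
          by_contra h
          rw [not_nonempty_iff_eq_empty] at h
          have hcl : IsClosed A := by
            apply isClosed_of_closure_subset
            intro z hz
            by_contra hzA
            have hzf : z ∈ frontier A := by rw [hA.frontier_eq]; exact ⟨hz, hzA⟩
            rw [h] at hzf
            exact absurd hzf (Set.notMem_empty z)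
          rcases isClopen_iff.mp ⟨hcl, hA⟩ with h' | h'
          · exact hAne.ne_empty h'
          · exact hU (by rw [h', compl_univ])
        obtain ⟨b, hb⟩ := hfr
        have hbA : b ∈ closure A := frontier_subset_closure hb
        obtain ⟨y, hyA, hyb⟩ := Metric.mem_closure_iff.mp hbA (Real.sqrt ε)
          (Real.sqrt_pos.mpr hε)
        have hbc : b ∈ Aᶜ := by rw [hA.frontier_eq] at hb; exact hb.2
        have hdy : infDist y Aᶜ < Real.sqrt ε := by
          calc infDist y Aᶜ ≤ dist y b := infDist_le_dist_of_mem hbc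
            _ = dist b y := dist_comm y b
            _ < Real.sqrt ε := hyb
        refine ⟨y, hAΩ hyA, ?_⟩
        calc infDist y Aᶜ ^ 2 < Real.sqrt ε ^ 2 :=
              pow_lt_pow_left₀ hdy infDist_nonneg (by norm_num)
          _ = ε := Real.sq_sqrt hε.le
  apply le_antisymm
  · by_contra h
    push_neg at h
    obtain ⟨y, hy, hlt⟩ := key _ h
    have hle := csInf_le hbdd ⟨y, hy, rfl⟩
    simp only at hle
    linarith
  · refine le_csInf (hΩne.image _) ?_
    rintro v ⟨y, -, rfl⟩
    positivity


lemma ext_eq (A Ω : Set (EuclideanSpace ℝ (Fin n))) (hA : IsOpen A)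
    (hAne : A.Nonempty) (hAΩ : A ⊆ Ω) :
    extMinus Ω (fun y => infDist y Aᶜ ^ 2) = fun y => infDist y Aᶜ ^ 2 := by
  funext y
  unfold extMinus
  split_ifs with h
  · rfl
  · rw [inf_zero A Ω hA hAne hAΩ]
    have hyc : y ∈ Aᶜ := fun hyA => h (hAΩ hyA)
    rw [infDist_zero_of_mem hyc]
    norm_num


end MedAux

open Metric Set

/-- For `Ω ⊂ ℝⁿ` open, `A ⊂ Ω` non-empty open, `f = dist²(·, Aᶜ)` and its
extension `f⁻_Ω̄`, one has, for all `x ∈ closure Ω`,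
`ℳ(λ; Aᶜ)(x) = (1+λ)(f⁻_Ω̄(x) − C^l_{λ,Ω}(f⁻_Ω̄)(x))`. -/
theorem medialAxisMap_eq_local_open {n : ℕ} (Ω A : Set (EuclideanSpace ℝ (Fin n)))
    (hΩo : IsOpen Ω) (hA : IsOpen A) (hAne : A.Nonempty) (hAΩ : A ⊆ Ω)
    (lam : ℝ) (hlam : 0 < lam) :
    ∀ x ∈ closure Ω,
      medialAxisMap lam Aᶜ x
        = (1 + lam) * (extMinus Ω (fun y => (Metric.infDist y Aᶜ) ^ 2) x
            - moreauUpperLoc lam Ω (moreauLowerLoc lam Ω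
                (extMinus Ω (fun y => (Metric.infDist y Aᶜ) ^ 2))) x) := by
  intro x hx
  rw [MedAux.ext_eq A Ω hA hAne hAΩ]
  simp only [medialAxisMap, moreauUpper, moreauLower, moreauUpperLoc, moreauLowerLoc]
  simp only [MedAux.moreauLower_eq hlam Aᶜ hA.isClosed_compl]
  have himg : (fun y => sInf ((fun w => infDist w Aᶜ ^ 2 + lam * ‖w - y‖ ^ 2)
        '' closure Ω) - lam * ‖y - x‖ ^ 2) '' closure Ω
      = (fun y => lam / (1 + lam) * infDist y Aᶜ ^ 2 - lam * ‖y - x‖ ^ 2)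
        '' closure Ω := by
    apply Set.image_congr
    intro y hy
    rw [MedAux.moreauLowerLoc_eq hlam A Ω hA hAΩ y hy]
  rw [himg, ← MedAux.moreauUpper_loc_eq hlam A Ω hAΩ x hx]
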